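/- With n(N), κ(N), λ(N) ∈ [0,∞) satisfying n(N)/N → ρ ∈ (0,∞), κ(N)/N → κ, λ(N)/N → λ as N → ∞, the normalization constant Z(N) := ∏_{j=1}^{n(N)} Γ(j+1)Γ(j+κ(N))Γ(j+λ(N))/Γ(j+n(N)+κ(N)+λ(N)) satisfies lim_{N→∞} (1/N²) log Z(N) = ρ² B(κ/ρ, λ/ρ), where B(s,t) = (1+s)²/2·log(1+s) − s²/2·log s + (1+t)²/2·log(1+t) − t²/2·log t − (2+s+t)²/2·log(2+s+t) + (1+s+t)²/2·log(1+s+t). -/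

import Mathlib

open Real Filter Set

noncomputable def sL (x : ℝ) : ℝ := x * Real.log x - x
noncomputable def sPhi (x : ℝ) : ℝ := x^2/2 * Real.log x - 3*x^2/4


lemma fact_lb : ∀ k : ℕ, 1 ≤ k → (k:ℝ)^k * Real.exp (-(k:ℝ)) ≤ (Nat.factorial k : ℝ) := by
  intro k hk
  induction k with
  | zero => omega
  | succ m ih =>
    rcases Nat.eq_or_lt_of_le hk with h1 | h1
    · have : m = 0 := by omega
      subst this
      have h : Real.exp (-((0:ℕ)+1:ℝ)) ≤ 1 := by
        rw [Real.exp_le_one_iff]; norm_num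
      simpa using h
    · have hm : 1 ≤ m := by omega
      have ihm := ih hm
      have hmpos : (0:ℝ) < m := by exact_mod_cast hm
      have key : ((m:ℝ)+1)^m ≤ (m:ℝ)^m * Real.exp 1 := by
        have h2 : (m:ℝ)+1 ≤ (m:ℝ) * Real.exp (1/(m:ℝ)) := by
          have := Real.add_one_le_exp (1/(m:ℝ))
          have e : (m:ℝ)+1 = (m:ℝ)*(1/(m:ℝ)+1) := by field_simp; ring
          nlinarith
        calc ((m:ℝ)+1)^m ≤ ((m:ℝ) * Real.exp (1/(m:ℝ)))^m :=
              pow_le_pow_left₀ (by positivity) h2 m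
        _ = (m:ℝ)^m * Real.exp (1/(m:ℝ)) ^ m := by rw [mul_pow]
        _ = (m:ℝ)^m * Real.exp 1 := by
              rw [← Real.exp_nat_mul]; field_simp
      have hfact : (Nat.factorial (m+1) : ℝ) = ((m:ℝ)+1) * Nat.factorial m := by
        push_cast [Nat.factorial_succ]; ring
      rw [hfact]
      push_cast
      have e1 : Real.exp (-((m:ℝ)+1)) = Real.exp (-(m:ℝ)) * Real.exp (-1) := by
        rw [← Real.exp_add]; ring_nf
      rw [e1]
      have h3 : ((m:ℝ)+1)^m * Real.exp (-1) ≤ (m:ℝ)^m := by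
        rw [Real.exp_neg]
        rw [mul_inv_le_iff₀ (Real.exp_pos 1)]
        linarith [key]
      have h4 : (0:ℝ) < Real.exp (-(m:ℝ)) := Real.exp_pos _
      have h5 : (0:ℝ) < (m:ℝ)+1 := by positivity
      calc ((m:ℝ)+1)^(m+1) * (Real.exp (-(m:ℝ)) * Real.exp (-1))
          = ((m:ℝ)+1) * (((m:ℝ)+1)^m * Real.exp (-1)) * Real.exp (-(m:ℝ)) := by ring
        _ ≤ ((m:ℝ)+1) * (m:ℝ)^m * Real.exp (-(m:ℝ)) := by
            apply mul_le_mul_of_nonneg_right _ (le_of_lt h4)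
            exact mul_le_mul_of_nonneg_left h3 (le_of_lt h5)
        _ = ((m:ℝ)+1) * ((m:ℝ)^m * Real.exp (-(m:ℝ))) := by ring
        _ ≤ ((m:ℝ)+1) * (Nat.factorial m : ℝ) :=
            mul_le_mul_of_nonneg_left ihm (by positivity)

lemma fact_ub : ∀ k : ℕ, 1 ≤ k →
    (Nat.factorial k : ℝ) ≤ (k:ℝ)^(k+1) * Real.exp (-(k:ℝ)) * Real.exp 1 := by
  intro k hk
  induction k with
  | zero => omega
  | succ m ih =>
    rcases Nat.eq_or_lt_of_le hk with h1 | h1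
    · have : m = 0 := by omega
      subst this
      have h : Real.exp (-((0:ℕ)+1:ℝ)) * Real.exp 1 = 1 := by
        rw [← Real.exp_add]; norm_num
      norm_num at h ⊢
      nlinarith [Real.exp_pos (1:ℝ), h]
    · have hm : 1 ≤ m := by omega
      have ihm := ih hm
      have hmpos : (0:ℝ) < m := by exact_mod_cast hm
      have key : (m:ℝ)^(m+1) * Real.exp 1 ≤ ((m:ℝ)+1)^(m+1) := by
        have hlog : 1/((m:ℝ)+1) ≤ Real.log (((m:ℝ)+1)/(m:ℝ)) := by
          have h0 : (0:ℝ) < (m:ℝ)/((m:ℝ)+1) := by positivity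
          have hle := Real.log_le_sub_one_of_pos h0
          have hd : Real.log ((m:ℝ)/((m:ℝ)+1)) = - Real.log (((m:ℝ)+1)/(m:ℝ)) := by
            rw [← Real.log_inv]; congr 1; field_simp
          rw [hd] at hle
          have e : (m:ℝ)/((m:ℝ)+1) - 1 = -(1/((m:ℝ)+1)) := by field_simp; ring
          rw [e] at hle
          linarith
        have h2 : Real.exp 1 ≤ (((m:ℝ)+1)/(m:ℝ))^(m+1) := by
          have h3 : (1:ℝ) ≤ ((m:ℝ)+1) * Real.log (((m:ℝ)+1)/(m:ℝ)) := by
            have e : (1:ℝ) = ((m:ℝ)+1) * (1/((m:ℝ)+1)) := by field_simp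
            nlinarith
          calc Real.exp 1 ≤ Real.exp (((m:ℝ)+1) * Real.log (((m:ℝ)+1)/(m:ℝ))) :=
                Real.exp_le_exp.2 h3
          _ = (((m:ℝ)+1)/(m:ℝ))^(m+1) := by
              have hc : ((m:ℝ)+1) * Real.log (((m:ℝ)+1)/(m:ℝ))
                  = ((m+1 : ℕ):ℝ) * Real.log (((m:ℝ)+1)/(m:ℝ)) := by push_cast; ring
              rw [hc, ← Real.log_pow, Real.exp_log (by positivity)]
        calc (m:ℝ)^(m+1) * Real.exp 1 ≤ (m:ℝ)^(m+1) * (((m:ℝ)+1)/(m:ℝ))^(m+1) :=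
              mul_le_mul_of_nonneg_left h2 (by positivity)
        _ = ((m:ℝ)+1)^(m+1) := by
            rw [← mul_pow]; congr 1; field_simp
      have hfact : (Nat.factorial (m+1) : ℝ) = ((m:ℝ)+1) * Nat.factorial m := by
        push_cast [Nat.factorial_succ]; ring
      rw [hfact]
      push_cast
      have e1 : Real.exp (-((m:ℝ)+1)) = Real.exp (-(m:ℝ)) * Real.exp (-1) := by
        rw [← Real.exp_add]; ring_nf
      have h5 : Real.exp (-1) * Real.exp 1 = 1 := by rw [← Real.exp_add]; simp
      have hpos : (0:ℝ) < Real.exp (-(m:ℝ)) := Real.exp_pos _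
      have h4 : ((m:ℝ)+1) * ((m:ℝ)^(m+1) * Real.exp 1) ≤ ((m:ℝ)+1) * ((m:ℝ)+1)^(m+1) :=
        mul_le_mul_of_nonneg_left key (by positivity)
      calc ((m:ℝ)+1) * (Nat.factorial m : ℝ)
          ≤ ((m:ℝ)+1) * ((m:ℝ)^(m+1) * Real.exp (-(m:ℝ)) * Real.exp 1) :=
            mul_le_mul_of_nonneg_left ihm (by positivity)
        _ = ((m:ℝ)+1) * ((m:ℝ)^(m+1) * Real.exp 1) * Real.exp (-(m:ℝ)) := by ring
        _ ≤ ((m:ℝ)+1) * ((m:ℝ)+1)^(m+1) * Real.exp (-(m:ℝ)) :=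
            mul_le_mul_of_nonneg_right h4 (le_of_lt hpos)
        _ = ((m:ℝ)+1)^(m+1+1) * Real.exp (-((m:ℝ)+1)) * Real.exp 1 := by
            rw [e1]
            calc ((m:ℝ)+1) * ((m:ℝ)+1)^(m+1) * Real.exp (-(m:ℝ))
                = ((m:ℝ)+1)^(m+1+1) * Real.exp (-(m:ℝ)) * (Real.exp (-1) * Real.exp 1) := by
                  rw [h5]; ring
              _ = ((m:ℝ)+1)^(m+1+1) * (Real.exp (-(m:ℝ)) * Real.exp (-1)) * Real.exp 1 := by ring



lemma sL_continuous : Continuous sL := by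
  unfold sL
  exact Real.continuous_mul_log.sub continuous_id

lemma sL_hasDeriv {x : ℝ} (hx : 0 < x) : HasDerivAt sL (Real.log x) x := by
  have h1 : HasDerivAt (fun y : ℝ => y * Real.log y) (Real.log x + 1) x := by
    have := (hasDerivAt_id x).mul (Real.hasDerivAt_log (ne_of_gt hx))
    exact this.congr_deriv (by simp [ne_of_gt hx])
  have := h1.sub (hasDerivAt_id x)
  exact this.congr_deriv (by ring)

lemma conv_mid {u v w : ℝ} (hu : 0 < u) (huv : u < v) (hvw : v < w) :
    Real.log (Real.Gamma v) ≤ ((w - v)/(w-u)) * Real.log (Real.Gamma u)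
      + ((v-u)/(w-u)) * Real.log (Real.Gamma w) := by
  have hwu : (0:ℝ) < w - u := by linarith
  have ha : (0:ℝ) ≤ (w - v)/(w-u) := div_nonneg (by linarith) (by linarith)
  have hb : (0:ℝ) ≤ (v-u)/(w-u) := div_nonneg (by linarith) (by linarith)
  have hab : (w - v)/(w-u) + (v-u)/(w-u) = 1 := by field_simp; ring
  have := Real.convexOn_log_Gamma.2 (mem_Ioi.2 hu)
    (mem_Ioi.2 (lt_trans hu (lt_trans huv hvw))) ha hb hab
  simp only [smul_eq_mul, Function.comp_apply] at this
  have hcomb : (w - v) / (w - u) * u + (v - u) / (w - u) * w = v := by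
    rw [div_mul_eq_mul_div, div_mul_eq_mul_div, ← add_div,
      div_eq_iff (ne_of_gt hwu)]
    ring
  rw [hcomb] at this
  exact this

lemma gamma_nat' (n : ℕ) (hn : 1 ≤ n) : Real.Gamma (n : ℝ) = Nat.factorial (n-1) := by
  obtain ⟨m, rfl⟩ : ∃ m, n = m + 1 := ⟨n - 1, by omega⟩
  have : ((m+1 : ℕ) : ℝ) = (m : ℝ) + 1 := by push_cast; ring
  rw [this, Real.Gamma_nat_eq_factorial]
  have h : m + 1 - 1 = m := by omega
  rw [h]

-- Stirling-type bound
lemma stirling_bound : ∀ x : ℝ, 1 ≤ x → |Real.log (Real.Gamma x) - sL x| ≤ 2 * Real.log x + 3 := by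
  intro x hx
  have hx0 : (0:ℝ) < x := by linarith
  have hlogx : 0 ≤ Real.log x := Real.log_nonneg hx
  have hlog2 : Real.log 2 ≤ 1 := by
    have := Real.log_le_sub_one_of_pos (by norm_num : (0:ℝ) < 2)
    linarith
  have hlog2' : 0 ≤ Real.log 2 := Real.log_nonneg (by norm_num)
  rcases le_or_gt x 2 with hx2 | hx2
  · -- 1 ≤ x ≤ 2
    have hG1 : Real.log (Real.Gamma 1) = 0 := by rw [Real.Gamma_one, Real.log_one]
    have hG2 : Real.log (Real.Gamma 2) = 0 := by
      have : ((1:ℕ):ℝ) + 1 = 2 := by norm_num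
      rw [← this, Real.Gamma_nat_eq_factorial]; simp
    have hG3 : Real.log (Real.Gamma 3) = Real.log 2 := by
      have : ((2:ℕ):ℝ) + 1 = 3 := by norm_num
      rw [← this, Real.Gamma_nat_eq_factorial]; norm_num
    -- upper: log Γ x ≤ 0
    have hupper : Real.log (Real.Gamma x) ≤ 0 := by
      rcases eq_or_lt_of_le hx with h1 | h1
      · rw [← h1]; rw [hG1]
      · rcases eq_or_lt_of_le hx2 with h2 | h2
        · rw [h2, hG2]
        · have := conv_mid (by norm_num : (0:ℝ) < 1) h1 h2
          rw [hG1, hG2] at this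
          simpa using this
    -- lower: log Γ x ≥ - log 2
    have hlower : -Real.log 2 ≤ Real.log (Real.Gamma x) := by
      rcases eq_or_lt_of_le hx2 with h2 | h2
      · rw [h2, hG2]; linarith
      · have h3 := conv_mid hx0 h2 (by norm_num : (2:ℝ) < 3)
        rw [hG2, hG3] at h3
        have hd : (0:ℝ) < 3 - x := by linarith
        have hkey : 0 ≤ ((3 - 2)/(3-x)) * Real.log (Real.Gamma x) + ((2-x)/(3-x)) * Real.log 2 := by
          linarith
        have h5 : -((2-x) * Real.log 2) ≤ Real.log (Real.Gamma x) := by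
          have := mul_le_mul_of_nonneg_left hkey (le_of_lt hd)
          rw [mul_zero] at this
          field_simp at this
          nlinarith [this]
        nlinarith [hlog2']
    -- sL bounds on [1,2]
    have hsl_ub : sL x ≤ 2 * Real.log 2 - 1 := by
      unfold sL
      have h6 : Real.log x ≤ Real.log 2 := Real.log_le_log hx0 hx2
      nlinarith
    have hsl_lb : -2 ≤ sL x := by
      unfold sL
      nlinarith
    rw [abs_le]
    constructor <;> nlinarith
  · -- x > 2
    set n : ℕ := ⌊x⌋₊ with hn
    have hn2 : 2 ≤ n := by
      rw [hn]; exact Nat.le_floor (by exact_mod_cast le_of_lt hx2)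
    have hnx : (n:ℝ) ≤ x := Nat.floor_le (le_of_lt hx0)
    have hxn1 : x < (n:ℝ) + 1 := by
      have := Nat.lt_floor_add_one x
      exact_mod_cast this
    have hnpos : (0:ℝ) < n := by positivity
    have hn1pos : (0:ℝ) < (n:ℝ) - 1 := by
      have : (2:ℝ) ≤ (n:ℝ) := by exact_mod_cast hn2
      linarith
    have hGn : Real.log (Real.Gamma (n:ℝ)) = Real.log (Nat.factorial (n-1)) := by
      rw [gamma_nat' n (by omega)]
    have hGn1 : Real.log (Real.Gamma ((n:ℝ)+1)) = Real.log (Nat.factorial n) := by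
      have : ((n:ℕ):ℝ) + 1 = ((n:ℝ)+1) := by push_cast; ring
      rw [← this, Real.Gamma_nat_eq_factorial]
    have hGnm1 : Real.log (Real.Gamma ((n:ℝ)-1)) = Real.log (Nat.factorial (n-2)) := by
      have e : ((n-1 : ℕ):ℝ) = (n:ℝ) - 1 := by
        have : 1 ≤ n := by omega
        push_cast [this]; ring
      rw [← e, gamma_nat' (n-1) (by omega)]
      have h : n - 1 - 1 = n - 2 := by omega
      rw [h]
    have hmono : Real.log (Nat.factorial (n-2)) ≤ Real.log (Nat.factorial (n-1)) := by
      apply Real.log_le_log (by positivity)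
      exact_mod_cast Nat.factorial_le (by omega)
    have hmono2 : Real.log (Nat.factorial (n-1)) ≤ Real.log (Nat.factorial n) := by
      apply Real.log_le_log (by positivity)
      exact_mod_cast Nat.factorial_le (by omega)
    -- upper bound : log Γ x ≤ log n!
    have hupper : Real.log (Real.Gamma x) ≤ Real.log (Nat.factorial n) := by
      rcases eq_or_lt_of_le hnx with h1 | h1
      · rw [← h1, hGn]; exact hmono2
      · have := conv_mid hnpos h1 hxn1
        rw [hGn, hGn1] at this
        have ha : (0:ℝ) ≤ ((n:ℝ) + 1 - x)/((n:ℝ)+1-(n:ℝ)) := by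
          apply div_nonneg <;> linarith
        have hb : (0:ℝ) ≤ (x - (n:ℝ))/((n:ℝ)+1-(n:ℝ)) := by
          apply div_nonneg <;> linarith
        have hab : ((n:ℝ) + 1 - x)/((n:ℝ)+1-(n:ℝ)) + (x-(n:ℝ))/((n:ℝ)+1-(n:ℝ)) = 1 := by
          field_simp
          ring
        calc Real.log (Real.Gamma x)
            ≤ (((n:ℝ)+1 - x)/((n:ℝ)+1-(n:ℝ))) * Real.log (Nat.factorial (n-1))
              + ((x-(n:ℝ))/((n:ℝ)+1-(n:ℝ))) * Real.log (Nat.factorial n) := this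
          _ ≤ (((n:ℝ)+1 - x)/((n:ℝ)+1-(n:ℝ))) * Real.log (Nat.factorial n)
              + ((x-(n:ℝ))/((n:ℝ)+1-(n:ℝ))) * Real.log (Nat.factorial n) := by
              apply add_le_add_left
              exact mul_le_mul_of_nonneg_left hmono2 ha
          _ = Real.log (Nat.factorial n) := by
              rw [← add_mul, hab, one_mul]
    -- lower bound : log (n-1)! ≤ log Γ x
    have hlower : Real.log (Nat.factorial (n-1)) ≤ Real.log (Real.Gamma x) := by
      rcases eq_or_lt_of_le hnx with h1 | h1
      · rw [← h1, hGn]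
      · have h2 := conv_mid hn1pos (by linarith : (n:ℝ) - 1 < (n:ℝ)) h1
        rw [hGn, hGnm1] at h2
        -- f(n) ≤ ((x-n)/(x-n+1)) f(n-1) + (1/(x-n+1)) f(x)
        have hden : (0:ℝ) < x - ((n:ℝ)-1) := by linarith
        -- multiply through
        have h3 : (x - ((n:ℝ)-1)) * Real.log (Nat.factorial (n-1))
            ≤ (x - (n:ℝ)) * Real.log (Nat.factorial (n-2)) + Real.log (Real.Gamma x) := by
          have := mul_le_mul_of_nonneg_left h2 (le_of_lt hden)
          have e1 : (x - (n:ℝ)) / (x - ((n:ℝ)-1)) * Real.log (Nat.factorial (n-2)) * (x - ((n:ℝ)-1))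
              = (x - (n:ℝ)) * Real.log (Nat.factorial (n-2)) := by
            field_simp
          have e2 : ((n:ℝ) - ((n:ℝ)-1)) / (x - ((n:ℝ)-1)) * Real.log (Real.Gamma x) * (x - ((n:ℝ)-1))
              = Real.log (Real.Gamma x) := by
            field_simp
            ring
          nlinarith [this]
        nlinarith [mul_le_mul_of_nonneg_left hmono (by linarith : (0:ℝ) ≤ x - (n:ℝ))]
    -- quantitative bounds
    have hn1 : (1:ℝ) ≤ (n:ℝ) := by
      have : (2:ℝ) ≤ (n:ℝ) := by exact_mod_cast hn2
      linarith
    have hn2' : (2:ℝ) ≤ (n:ℝ) := by exact_mod_cast hn2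
    have hq_ub : Real.log (Nat.factorial n) ≤ sL x + Real.log x + 2 := by
      have h1 := fact_ub n (by omega)
      have h2 : Real.log (Nat.factorial n)
          ≤ Real.log ((n:ℝ)^(n+1) * Real.exp (-(n:ℝ)) * Real.exp 1) :=
        Real.log_le_log (by positivity) h1
      rw [Real.log_mul (by positivity) (by positivity),
        Real.log_mul (by positivity) (by positivity),
        Real.log_pow, Real.log_exp, Real.log_exp] at h2
      have hlogn : Real.log (n:ℝ) ≤ Real.log x := Real.log_le_log hnpos hnx
      have hlogn0 : 0 ≤ Real.log (n:ℝ) := Real.log_nonneg hn1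
      have hA : ((n:ℝ)+1) * Real.log (n:ℝ) ≤ (x+1) * Real.log x := by
        have p1 := mul_le_mul_of_nonneg_left hlogn (show (0:ℝ) ≤ (n:ℝ)+1 by linarith)
        have p2 := mul_le_mul_of_nonneg_right (show (n:ℝ)+1 ≤ x+1 by linarith) hlogx
        linarith
      have hcast : ((n+1:ℕ):ℝ) = (n:ℝ)+1 := by push_cast; ring
      rw [hcast] at h2
      unfold sL
      linarith
    have hq_lb : sL x - 2*Real.log x ≤ Real.log (Nat.factorial (n-1)) := by
      have h1 := fact_lb (n-1) (by omega)
      have e : ((n-1:ℕ):ℝ) = (n:ℝ) - 1 := by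
        have h : 1 ≤ n := by omega
        push_cast [h]; ring
      rw [e] at h1
      have h2 : Real.log (((n:ℝ)-1)^(n-1) * Real.exp (-((n:ℝ)-1)))
          ≤ Real.log (Nat.factorial (n-1)) :=
        Real.log_le_log (by positivity) h1
      rw [Real.log_mul (by positivity) (by positivity),
        Real.log_pow, Real.log_exp] at h2
      have hsL : sL ((n:ℝ)-1) ≤ Real.log (Nat.factorial (n-1)) := by
        unfold sL
        rw [e] at h2
        linarith
      obtain ⟨c, hc, hslope⟩ := exists_hasDerivAt_eq_slope sL (fun y => Real.log y)
        (show (n:ℝ)-1 < x by linarith) sL_continuous.continuousOn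
        (fun y hy => sL_hasDeriv (by
          simp only [Set.mem_Ioo] at hy
          linarith [hy.1, hn2']))
      simp only [Set.mem_Ioo] at hc
      have hc1 : (1:ℝ) ≤ c := by linarith [hc.1, hn2']
      have hcx : c < x := hc.2
      have hdiff : sL x - sL ((n:ℝ)-1) = (x - ((n:ℝ)-1)) * Real.log c := by
        have hd : (0:ℝ) < x - ((n:ℝ)-1) := by linarith
        rw [eq_div_iff (ne_of_gt hd)] at hslope
        linarith [hslope]
      have hlogc_ub : Real.log c ≤ Real.log x := Real.log_le_log (by linarith) (le_of_lt hcx)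
      have hlogc0 : 0 ≤ Real.log c := Real.log_nonneg hc1
      have hxn2 : x - ((n:ℝ)-1) ≤ 2 := by linarith
      have hp : (x - ((n:ℝ)-1)) * Real.log c ≤ 2 * Real.log x :=
        mul_le_mul hxn2 hlogc_ub hlogc0 (by norm_num)
      linarith [hsL, hdiff, hp]
    rw [abs_le]
    constructor
    · linarith
    · linarith





lemma sPhi_eq (x : ℝ) : sPhi x = x/2 * (x * Real.log x) - 3*x^2/4 := by
  unfold sPhi; ring

lemma sPhi_continuous : Continuous sPhi := by
  have : (fun x => sPhi x) = fun x => x/2 * (x * Real.log x) - 3*x^2/4 := by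
    funext x; exact sPhi_eq x
  rw [show sPhi = fun x => sPhi x from rfl, this]
  exact ((continuous_id.div_const 2).mul Real.continuous_mul_log).sub
    (by continuity)

lemma sPhi_hasDeriv {x : ℝ} (hx : 0 < x) : HasDerivAt sPhi (sL x) x := by
  have h1 : HasDerivAt (fun y : ℝ => y^2/2 * Real.log y)
      (x * Real.log x + x/2) x := by
    have ha : HasDerivAt (fun y : ℝ => y^2/2) x x := by
      have := (hasDerivAt_pow 2 x).div_const 2
      exact this.congr_deriv (by norm_num)
    have := ha.mul (Real.hasDerivAt_log (ne_of_gt hx))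
    exact this.congr_deriv (by field_simp)
  have h2 : HasDerivAt (fun y : ℝ => 3*y^2/4) (3*x/2) x := by
    have := ((hasDerivAt_pow 2 x).const_mul 3).div_const 4
    exact this.congr_deriv (by norm_num; ring)
  have := h1.sub h2
  exact this.congr_deriv (by unfold sL; ring)

lemma riemann_sum (a : ℕ → ℝ) (ha0 : ∀ N, 0 ≤ a N) (m : ℕ → ℕ) (α ρ : ℝ)
    (hα : 0 ≤ α) (hρ : 0 < ρ)
    (haa : Tendsto (fun N : ℕ => a N / N) atTop (nhds α))
    (hm : Tendsto (fun N : ℕ => (m N : ℝ) / N) atTop (nhds ρ)) :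
    Tendsto (fun N : ℕ => (1/(N:ℝ)) * ∑ i ∈ Finset.range (m N), sL (((i:ℝ) + 1 + a N)/N))
      atTop (nhds (sPhi (ρ + α) - sPhi α)) := by
  set M : ℝ := ρ + α + 2 with hM
  have htel : ∀ N : ℕ,
      ∑ i ∈ Finset.range (m N),
        (sPhi (((i:ℝ) + 1 + a N)/N) - sPhi (((i:ℝ) + a N)/N))
      = sPhi (((m N : ℝ) + a N)/N) - sPhi (a N / N) := by
    intro N
    have h := Finset.sum_range_sub (fun i : ℕ => sPhi (((i:ℝ) + a N)/N)) (m N)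
    have h2 : ∑ i ∈ Finset.range (m N),
        (sPhi (((i:ℝ) + 1 + a N)/N) - sPhi (((i:ℝ) + a N)/N))
        = ∑ i ∈ Finset.range (m N),
          ((fun i : ℕ => sPhi (((i:ℝ) + a N)/N)) (i+1)
            - (fun i : ℕ => sPhi (((i:ℝ) + a N)/N)) i) := by
      apply Finset.sum_congr rfl
      intro i _
      have : ((i+1:ℕ):ℝ) = (i:ℝ) + 1 := by push_cast; ring
      simp only [this]
    rw [h2, h]
    norm_num
  -- main term tends to the limit
  have hmain : Tendsto (fun N : ℕ => sPhi (((m N : ℝ) + a N)/N) - sPhi (a N / N))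
      atTop (nhds (sPhi (ρ + α) - sPhi α)) := by
    have h1 : Tendsto (fun N : ℕ => ((m N : ℝ) + a N)/N) atTop (nhds (ρ + α)) := by
      have := hm.add haa
      simpa [add_div] using this
    exact ((sPhi_continuous.tendsto _).comp h1).sub ((sPhi_continuous.tendsto _).comp haa)
  -- error term tends to 0
  have herr : Tendsto (fun N : ℕ =>
      (1/(N:ℝ)) * ∑ i ∈ Finset.range (m N), sL (((i:ℝ) + 1 + a N)/N)
        - (sPhi (((m N : ℝ) + a N)/N) - sPhi (a N / N))) atTop (nhds 0) := by
    rw [NormedAddCommGroup.tendsto_nhds_zero]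
    intro ε hε
    have hcomp : IsCompact (Set.Icc (0:ℝ) M) := isCompact_Icc
    have hucont : UniformContinuousOn sL (Set.Icc 0 M) :=
      hcomp.uniformContinuousOn_of_continuous sL_continuous.continuousOn
    set ε' : ℝ := ε / (2*(ρ + 2)) with hε'def
    have hρ2 : (0:ℝ) < ρ + 2 := by linarith
    have hε'pos : 0 < ε' := by positivity
    obtain ⟨δ, hδpos, hδ⟩ := Metric.uniformContinuousOn_iff.1 hucont ε' hε'pos
    have ev1 : ∀ᶠ N : ℕ in atTop, a N / N < α + 1 :=
      haa.eventually_lt_const (by linarith)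
    have ev2 : ∀ᶠ N : ℕ in atTop, (m N : ℝ) / N < ρ + 1 :=
      hm.eventually_lt_const (by linarith)
    have ev3 : ∀ᶠ N : ℕ in atTop, 1/(N:ℝ) < δ :=
      tendsto_one_div_atTop_nhds_zero_nat.eventually_lt_const hδpos
    have ev4 : ∀ᶠ N : ℕ in atTop, 1 ≤ N := eventually_ge_atTop 1
    filter_upwards [ev1, ev2, ev3, ev4] with N h1 h2 h3 h4
    have hN : (0:ℝ) < N := by exact_mod_cast h4
    rw [← htel N, Finset.mul_sum, ← Finset.sum_sub_distrib]
    -- per-term bound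
    have hterm : ∀ i ∈ Finset.range (m N),
        ‖(1/(N:ℝ)) * sL (((i:ℝ) + 1 + a N)/N)
          - (sPhi (((i:ℝ) + 1 + a N)/N) - sPhi (((i:ℝ) + a N)/N))‖ ≤ ε' / N := by
      intro i hi
      have hi' : (i:ℝ) + 1 ≤ (m N : ℝ) := by
        have := Finset.mem_range.1 hi
        exact_mod_cast Nat.succ_le_of_lt this
      set u : ℝ := ((i:ℝ) + a N)/N with hu
      set v : ℝ := ((i:ℝ) + 1 + a N)/N with hv
      have huv : u < v := by
        rw [hu, hv, div_lt_div_iff₀ hN hN]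
        nlinarith
      have haN := ha0 N
      have hu0 : 0 ≤ u := by rw [hu]; positivity
      have hvM : v ≤ M := by
        rw [hv]
        have hle : ((i:ℝ)+1+a N)/N ≤ ((m N:ℝ) + a N)/N := by
          rw [div_le_div_iff₀ hN hN]
          nlinarith
        have h2' : ((m N:ℝ) + a N)/N ≤ ρ + α + 2 := by
          rw [add_div]; linarith
        rw [hM]; linarith
      have hgap : v - u = 1/(N:ℝ) := by
        rw [hu, hv]
        field_simp
        ring
      obtain ⟨c, hc, hslope⟩ := exists_hasDerivAt_eq_slope sPhi sL huv
        sPhi_continuous.continuousOn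
        (fun y hy => sPhi_hasDeriv (by
          simp only [Set.mem_Ioo] at hy
          linarith [hy.1, hu0]))
      simp only [Set.mem_Ioo] at hc
      have hceq : sPhi v - sPhi u = (1/(N:ℝ)) * sL c := by
        rw [hgap] at hslope
        rw [eq_div_iff (by positivity : (1:ℝ)/(N:ℝ) ≠ 0)] at hslope
        linarith [hslope]
      rw [hceq]
      have hdist : dist v c < δ := by
        rw [Real.dist_eq, abs_lt]
        constructor
        · linarith [hc.2, hδpos]
        · have : v - c < v - u := by linarith [hc.1]
          rw [hgap] at this
          linarith
      have hvmem : v ∈ Set.Icc (0:ℝ) M := ⟨by linarith, hvM⟩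
      have hcmem : c ∈ Set.Icc (0:ℝ) M := ⟨by linarith [hc.1], by linarith [hc.2]⟩
      have hsl : |sL v - sL c| < ε' := by
        have := hδ v hvmem c hcmem hdist
        rwa [Real.dist_eq] at this
      have heq2 : (1/(N:ℝ)) * sL v - (1/(N:ℝ)) * sL c = (1/(N:ℝ))*(sL v - sL c) := by
        ring
      rw [heq2, Real.norm_eq_abs, abs_mul, abs_of_pos (by positivity : (0:ℝ) < 1/(N:ℝ))]
      rw [div_eq_mul_inv ε', mul_comm ε' _, ← one_div]
      exact mul_le_mul_of_nonneg_left (le_of_lt hsl) (by positivity)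
    calc ‖∑ i ∈ Finset.range (m N),
        ((1/(N:ℝ)) * sL (((i:ℝ) + 1 + a N)/N)
          - (sPhi (((i:ℝ) + 1 + a N)/N) - sPhi (((i:ℝ) + a N)/N)))‖
        ≤ ∑ i ∈ Finset.range (m N),
          ‖(1/(N:ℝ)) * sL (((i:ℝ) + 1 + a N)/N)
            - (sPhi (((i:ℝ) + 1 + a N)/N) - sPhi (((i:ℝ) + a N)/N))‖ :=
          norm_sum_le _ _
      _ ≤ ∑ _i ∈ Finset.range (m N), ε'/(N:ℝ) := Finset.sum_le_sum hterm
      _ = (m N : ℝ) * (ε'/(N:ℝ)) := by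
          rw [Finset.sum_const, Finset.card_range, nsmul_eq_mul]
      _ = ((m N : ℝ)/(N:ℝ)) * ε' := by ring
      _ ≤ (ρ+1) * ε' := mul_le_mul_of_nonneg_right (le_of_lt h2) hε'pos.le
      _ < ε := by
          have hfrac : (ρ+1)/(2*(ρ+2)) < 1 := by
            rw [div_lt_one (by linarith)]
            linarith
          calc (ρ+1) * ε' = ((ρ+1)/(2*(ρ+2))) * ε := by rw [hε'def]; ring
            _ < 1 * ε := mul_lt_mul_of_pos_right hfrac hε
            _ = ε := one_mul ε
  have hfun : (fun N : ℕ => (1/(N:ℝ)) * ∑ i ∈ Finset.range (m N), sL (((i:ℝ) + 1 + a N)/N))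
      = fun N : ℕ => ((1/(N:ℝ)) * ∑ i ∈ Finset.range (m N), sL (((i:ℝ) + 1 + a N)/N)
          - (sPhi (((m N : ℝ) + a N)/N) - sPhi (a N / N)))
        + (sPhi (((m N : ℝ) + a N)/N) - sPhi (a N / N)) := by
    funext N; ring
  rw [hfun]
  have := herr.add hmain
  simpa using this




lemma sL_scale {N : ℝ} (hN : 0 < N) {z : ℝ} (hz : 0 ≤ z) :
    sL z = N * sL (z/N) + z * Real.log N := by
  rcases eq_or_lt_of_le hz with h0 | h0
  · rw [← h0]
    simp [sL]
  · unfold sL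
    rw [Real.log_div (ne_of_gt h0) (ne_of_gt hN)]
    field_simp
    ring

lemma sum_shift (f : ℕ → ℝ) (nn : ℕ) :
    ∑ j ∈ Finset.Icc 1 nn, f j = ∑ i ∈ Finset.range nn, f (i+1) := by
  rw [← Finset.Ico_add_one_right_eq_Icc, Finset.sum_Ico_eq_sum_range]
  exact Finset.sum_congr (by norm_num) (fun i _ => by rw [Nat.add_comm])

lemma gauss_real (nn : ℕ) : ∑ j ∈ Finset.Icc 1 nn, (2*(j:ℝ)+1-(nn:ℝ)) = 2*nn := by
  have h : ∑ j ∈ Finset.Icc 1 nn, (j:ℝ) = nn*(nn+1)/2 := by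
    induction nn with
    | zero => simp
    | succ m ih =>
      rw [Finset.sum_Icc_succ_top (by omega : 1 ≤ m+1), ih]
      push_cast
      ring
  calc ∑ j ∈ Finset.Icc 1 nn, (2*(j:ℝ)+1-(nn:ℝ))
      = ∑ j ∈ Finset.Icc 1 nn, (2*(j:ℝ) + (1-(nn:ℝ))) := by
        apply Finset.sum_congr rfl; intros; ring
    _ = (∑ j ∈ Finset.Icc 1 nn, 2*(j:ℝ)) + ∑ _j ∈ Finset.Icc 1 nn, (1-(nn:ℝ)) :=
        Finset.sum_add_distrib
    _ = 2*((nn:ℝ)*(nn+1)/2) + (nn:ℝ)*(1-(nn:ℝ)) := by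
        rw [← Finset.mul_sum, h, Finset.sum_const, Nat.card_Icc]
        norm_num [nsmul_eq_mul]
    _ = 2*nn := by ring

lemma final_algebra (ρ κL lamL : ℝ) (hρ : 0 < ρ) (hκL : 0 ≤ κL) (hlamL : 0 ≤ lamL) :
    (sPhi (ρ+0) - sPhi 0) + (sPhi (ρ+κL) - sPhi κL) + (sPhi (ρ+lamL) - sPhi lamL)
      - (sPhi (ρ+(ρ+κL+lamL)) - sPhi (ρ+κL+lamL))
    = ρ^2 * ((1 + κL/ρ)^2/2 * Real.log (1+κL/ρ) - (κL/ρ)^2/2*Real.log (κL/ρ)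
        + (1 + lamL/ρ)^2/2 * Real.log (1+lamL/ρ) - (lamL/ρ)^2/2*Real.log (lamL/ρ)
        - (2 + κL/ρ + lamL/ρ)^2/2 * Real.log (2+κL/ρ+lamL/ρ)
        + (1 + κL/ρ + lamL/ρ)^2/2 * Real.log (1+κL/ρ+lamL/ρ)) := by
  have hρ' := ne_of_gt hρ
  have e1 : 1 + κL/ρ = (ρ+κL)/ρ := by field_simp
  have e2 : 1 + lamL/ρ = (ρ+lamL)/ρ := by field_simp
  have e3 : 2 + κL/ρ + lamL/ρ = (ρ+(ρ+κL+lamL))/ρ := by field_simp; ring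
  have e4 : 1 + κL/ρ + lamL/ρ = (ρ+κL+lamL)/ρ := by field_simp
  have l1 : Real.log ((ρ+κL)/ρ) = Real.log (ρ+κL) - Real.log ρ :=
    Real.log_div (by positivity) hρ'
  have l2 : Real.log ((ρ+lamL)/ρ) = Real.log (ρ+lamL) - Real.log ρ :=
    Real.log_div (by positivity) hρ'
  have l3 : Real.log ((ρ+(ρ+κL+lamL))/ρ) = Real.log (ρ+(ρ+κL+lamL)) - Real.log ρ :=
    Real.log_div (by positivity) hρ'
  have l4 : Real.log ((ρ+κL+lamL)/ρ) = Real.log (ρ+κL+lamL) - Real.log ρ :=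
    Real.log_div (by positivity) hρ'
  have lk : (κL/ρ)^2/2 * Real.log (κL/ρ) = κL^2/(2*ρ^2) * (Real.log κL - Real.log ρ) := by
    rcases eq_or_lt_of_le hκL with h | h
    · rw [← h]; simp
    · rw [Real.log_div (ne_of_gt h) hρ', div_pow]; ring
  have ll : (lamL/ρ)^2/2 * Real.log (lamL/ρ) = lamL^2/(2*ρ^2) * (Real.log lamL - Real.log ρ) := by
    rcases eq_or_lt_of_le hlamL with h | h
    · rw [← h]; simp
    · rw [Real.log_div (ne_of_gt h) hρ', div_pow]; ring
  rw [e4, e3, e2, e1, l1, l2, l3, l4, lk, ll]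
  unfold sPhi
  simp only [Real.log_zero]
  field_simp
  ring





lemma log_div_nat_tendsto : Tendsto (fun N : ℕ => Real.log N / N) atTop (nhds 0) := by
  have h := Real.isLittleO_log_id_atTop.tendsto_div_nhds_zero
  have := h.comp (tendsto_natCast_atTop_atTop (R := ℝ))
  exact this

lemma combined_limit (n : ℕ → ℕ) (κ lam : ℕ → ℝ) (hκ0 : ∀ N, 0 ≤ κ N) (hlam0 : ∀ N, 0 ≤ lam N)
    (ρ κL lamL : ℝ) (hρ : 0 < ρ) (hκL : 0 ≤ κL) (hlamL : 0 ≤ lamL)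
    (hn : Tendsto (fun N : ℕ => (n N : ℝ) / N) atTop (nhds ρ))
    (hκ : Tendsto (fun N : ℕ => κ N / N) atTop (nhds κL))
    (hlam : Tendsto (fun N : ℕ => lam N / N) atTop (nhds lamL)) :
    Tendsto (fun N : ℕ => (1/(N:ℝ)^2) * ∑ j ∈ Finset.Icc 1 (n N),
        (sL ((j:ℝ)+1) + sL ((j:ℝ)+κ N) + sL ((j:ℝ)+lam N)
          - sL ((j:ℝ)+(n N : ℝ)+κ N+lam N)))
      atTop (nhds ((sPhi (ρ+0) - sPhi 0) + (sPhi (ρ+κL) - sPhi κL)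
        + (sPhi (ρ+lamL) - sPhi lamL) - (sPhi (ρ+(ρ+κL+lamL)) - sPhi (ρ+κL+lamL)))) := by
  have r1 := riemann_sum (fun _ => (1:ℝ)) (fun _ => zero_le_one) n 0 ρ le_rfl hρ
    (by simpa using tendsto_one_div_atTop_nhds_zero_nat (𝕜 := ℝ)) hn
  have r2 := riemann_sum κ hκ0 n κL ρ hκL hρ hκ hn
  have r3 := riemann_sum lam hlam0 n lamL ρ hlamL hρ hlam hn
  have r4 := riemann_sum (fun N => (n N : ℝ) + κ N + lam N)
    (fun N => by have := hκ0 N; have := hlam0 N; positivity) n (ρ+κL+lamL) ρ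
    (by positivity) hρ
    (by
      have := (hn.add hκ).add hlam
      apply this.congr
      intro N
      simp [add_div])
    hn
  have r5 : Tendsto (fun N : ℕ => 2*((n N:ℝ)/N) * (Real.log N/N)) atTop (nhds 0) := by
    have := (hn.const_mul 2).mul log_div_nat_tendsto
    simpa using this
  have hcomb := (((r1.add r2).add r3).sub r4).add r5
  rw [add_zero] at hcomb
  apply hcomb.congr'
  filter_upwards [eventually_ge_atTop 1] with N hN1
  have hN : (0:ℝ) < N := by exact_mod_cast hN1
  have hκN := hκ0 N
  have hlamN := hlam0 N
  -- split the Icc sum pointwise via sL_scale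
  have hsplit : ∀ j ∈ Finset.Icc 1 (n N),
      sL ((j:ℝ)+1) + sL ((j:ℝ)+κ N) + sL ((j:ℝ)+lam N) - sL ((j:ℝ)+(n N:ℝ)+κ N+lam N)
      = (N:ℝ) * (sL (((j:ℝ)+1)/N) + sL (((j:ℝ)+κ N)/N) + sL (((j:ℝ)+lam N)/N)
          - sL (((j:ℝ)+(n N:ℝ)+κ N+lam N)/N))
        + (2*(j:ℝ)+1-(n N:ℝ)) * Real.log N := by
    intro j hj
    rw [sL_scale hN (by positivity : (0:ℝ) ≤ (j:ℝ)+1),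
        sL_scale hN (by positivity : (0:ℝ) ≤ (j:ℝ)+κ N),
        sL_scale hN (by positivity : (0:ℝ) ≤ (j:ℝ)+lam N),
        sL_scale hN (by positivity : (0:ℝ) ≤ (j:ℝ)+(n N:ℝ)+κ N+lam N)]
    ring
  rw [Finset.sum_congr rfl hsplit, Finset.sum_add_distrib, ← Finset.mul_sum,
    ← Finset.sum_mul, gauss_real]
  -- split inner sum of four terms
  have hsum4 : ∑ j ∈ Finset.Icc 1 (n N),
      (sL (((j:ℝ)+1)/N) + sL (((j:ℝ)+κ N)/N) + sL (((j:ℝ)+lam N)/N)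
        - sL (((j:ℝ)+(n N:ℝ)+κ N+lam N)/N))
      = (∑ i ∈ Finset.range (n N), sL (((i:ℝ)+1+1)/N))
        + (∑ i ∈ Finset.range (n N), sL (((i:ℝ)+1+κ N)/N))
        + (∑ i ∈ Finset.range (n N), sL (((i:ℝ)+1+lam N)/N))
        - (∑ i ∈ Finset.range (n N), sL (((i:ℝ)+1+((n N:ℝ)+κ N+lam N))/N)) := by
    rw [sum_shift (fun j => sL (((j:ℝ)+1)/N) + sL (((j:ℝ)+κ N)/N) + sL (((j:ℝ)+lam N)/N)
        - sL (((j:ℝ)+(n N:ℝ)+κ N+lam N)/N))]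
    rw [Finset.sum_sub_distrib, Finset.sum_add_distrib, Finset.sum_add_distrib]
    congr 1
    · congr 1
      · congr 1
        · apply Finset.sum_congr rfl; intro i _; push_cast; ring_nf
        · apply Finset.sum_congr rfl; intro i _; push_cast; ring_nf
      · apply Finset.sum_congr rfl; intro i _; push_cast; ring_nf
    · apply Finset.sum_congr rfl; intro i _; push_cast; ring_nf
  rw [hsum4]
  field_simp





lemma abs_four {a b c d a' b' c' d' C : ℝ} (h1 : |a - a'| ≤ C) (h2 : |b-b'| ≤ C)
    (h3 : |c-c'| ≤ C) (h4 : |d-d'| ≤ C) : |(a+b+c-d) - (a'+b'+c'-d')| ≤ 4*C := by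
  have e : (a+b+c-d) - (a'+b'+c'-d') = ((a-a') + (b-b') + (c-c')) - (d-d') := by ring
  rw [e]
  calc |((a-a') + (b-b') + (c-c')) - (d-d')|
      ≤ |(a-a') + (b-b') + (c-c')| + |d-d'| := abs_sub _ _
    _ ≤ (|(a-a') + (b-b')| + |c-c'|) + |d-d'| := by
        apply add_le_add_left (abs_add_le _ _)
    _ ≤ ((|a-a'| + |b-b'|) + |c-c'|) + |d-d'| := by
        apply add_le_add_left; apply add_le_add_left (abs_add_le _ _)
    _ ≤ 4*C := by linarith

lemma sum_err_bound (f g : ℕ → ℝ) (s : Finset ℕ) (C : ℝ)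
    (h : ∀ j ∈ s, |f j - g j| ≤ C) : |∑ j ∈ s, f j - ∑ j ∈ s, g j| ≤ s.card * C := by
  rw [← Finset.sum_sub_distrib]
  calc |∑ j ∈ s, (f j - g j)| ≤ ∑ j ∈ s, |f j - g j| := Finset.abs_sum_le_sum_abs _ _
    _ ≤ ∑ _j ∈ s, C := Finset.sum_le_sum h
    _ = s.card * C := by rw [Finset.sum_const, nsmul_eq_mul]

/-- Asymptotics of the Selberg normalization constant:
`(1/N²) log Z(N) → ρ² B(κ/ρ, λ/ρ)`. -/
theorem stmt7 (n : ℕ → ℕ) (κ lam : ℕ → ℝ) (hκ0 : ∀ N, 0 ≤ κ N) (hlam0 : ∀ N, 0 ≤ lam N)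
    (ρ κL lamL : ℝ) (hρ : 0 < ρ) (hκL : 0 ≤ κL) (hlamL : 0 ≤ lamL)
    (hn : Tendsto (fun N => (n N : ℝ) / N) atTop (nhds ρ))
    (hκ : Tendsto (fun N => κ N / N) atTop (nhds κL))
    (hlam : Tendsto (fun N => lam N / N) atTop (nhds lamL))
    (Z : ℕ → ℝ)
    (hZ : ∀ N, Z N = ∏ j ∈ Finset.Icc 1 (n N),
        Real.Gamma (j + 1) * Real.Gamma (j + κ N) * Real.Gamma (j + lam N) /
          Real.Gamma (j + n N + κ N + lam N))
    (B : ℝ → ℝ → ℝ)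
    (hB : ∀ s t, B s t =
        (1 + s) ^ 2 / 2 * Real.log (1 + s) - s ^ 2 / 2 * Real.log s
          + (1 + t) ^ 2 / 2 * Real.log (1 + t) - t ^ 2 / 2 * Real.log t
          - (2 + s + t) ^ 2 / 2 * Real.log (2 + s + t)
          + (1 + s + t) ^ 2 / 2 * Real.log (1 + s + t)) :
    Tendsto (fun N : ℕ => (1 / (N : ℝ) ^ 2) * Real.log (Z N)) atTop
      (nhds (ρ ^ 2 * B (κL / ρ) (lamL / ρ))) := by
  -- Gamma argument positivity facts (for j ≥ 1)
  have hargs : ∀ N : ℕ, ∀ j ∈ Finset.Icc 1 (n N),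
      (1:ℝ) ≤ (j:ℝ)+1 ∧ (1:ℝ) ≤ (j:ℝ)+κ N ∧ (1:ℝ) ≤ (j:ℝ)+lam N
        ∧ (1:ℝ) ≤ (j:ℝ)+(n N:ℝ)+κ N+lam N := by
    intro N j hj
    have hj1 : 1 ≤ j := (Finset.mem_Icc.1 hj).1
    have hj1' : (1:ℝ) ≤ (j:ℝ) := by exact_mod_cast hj1
    have h1 := hκ0 N
    have h2 := hlam0 N
    have h3 : (0:ℝ) ≤ (n N : ℝ) := by positivity
    refine ⟨by linarith, by linarith, by linarith, by linarith⟩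
  -- log Z as a sum
  have hlogZ : ∀ N : ℕ, Real.log (Z N) = ∑ j ∈ Finset.Icc 1 (n N),
      (Real.log (Real.Gamma ((j:ℝ)+1)) + Real.log (Real.Gamma ((j:ℝ)+κ N))
        + Real.log (Real.Gamma ((j:ℝ)+lam N))
        - Real.log (Real.Gamma ((j:ℝ)+(n N:ℝ)+κ N+lam N))) := by
    intro N
    rw [hZ]
    rw [Real.log_prod]
    · apply Finset.sum_congr rfl
      intro j hj
      obtain ⟨a1, a2, a3, a4⟩ := hargs N j hj
      have p1 : 0 < Real.Gamma ((j:ℝ)+1) := Real.Gamma_pos_of_pos (by linarith)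
      have p2 : 0 < Real.Gamma ((j:ℝ)+κ N) := Real.Gamma_pos_of_pos (by linarith)
      have p3 : 0 < Real.Gamma ((j:ℝ)+lam N) := Real.Gamma_pos_of_pos (by linarith)
      have p4 : 0 < Real.Gamma ((j:ℝ)+(n N:ℝ)+κ N+lam N) := Real.Gamma_pos_of_pos (by linarith)
      rw [Real.log_div (by positivity) (ne_of_gt p4),
        Real.log_mul (by positivity) (ne_of_gt p3),
        Real.log_mul (ne_of_gt p1) (ne_of_gt p2)]
    · intro j hj
      obtain ⟨a1, a2, a3, a4⟩ := hargs N j hj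
      have p1 : 0 < Real.Gamma ((j:ℝ)+1) := Real.Gamma_pos_of_pos (by linarith)
      have p2 : 0 < Real.Gamma ((j:ℝ)+κ N) := Real.Gamma_pos_of_pos (by linarith)
      have p3 : 0 < Real.Gamma ((j:ℝ)+lam N) := Real.Gamma_pos_of_pos (by linarith)
      have p4 : 0 < Real.Gamma ((j:ℝ)+(n N:ℝ)+κ N+lam N) := Real.Gamma_pos_of_pos (by linarith)
      positivity
  -- main sL-sum limit
  have hS := combined_limit n κ lam hκ0 hlam0 ρ κL lamL hρ hκL hlamL hn hκ hlam
  -- error term tends to zero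
  set K : ℝ := 2*ρ + κL + lamL + 4 with hK
  have hK1 : (1:ℝ) ≤ K := by rw [hK]; linarith
  have hKpos : (0:ℝ) < K := by linarith
  have hlogK : (0:ℝ) ≤ Real.log K := Real.log_nonneg hK1
  have herr : Tendsto (fun N : ℕ => (1/(N:ℝ)^2) *
      (∑ j ∈ Finset.Icc 1 (n N),
        (Real.log (Real.Gamma ((j:ℝ)+1)) + Real.log (Real.Gamma ((j:ℝ)+κ N))
          + Real.log (Real.Gamma ((j:ℝ)+lam N))
          - Real.log (Real.Gamma ((j:ℝ)+(n N:ℝ)+κ N+lam N)))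
      - ∑ j ∈ Finset.Icc 1 (n N),
        (sL ((j:ℝ)+1) + sL ((j:ℝ)+κ N) + sL ((j:ℝ)+lam N)
          - sL ((j:ℝ)+(n N:ℝ)+κ N+lam N)))) atTop (nhds 0) := by
    have hg : Tendsto (fun N : ℕ =>
        ((n N:ℝ)/N) * ((8*(Real.log K + Real.log N) + 12)/N)) atTop (nhds 0) := by
      have h1 : Tendsto (fun N : ℕ => (8*(Real.log K + Real.log N) + 12)/N)
          atTop (nhds 0) := by
        have h2 : Tendsto (fun N : ℕ => (8*Real.log K+12)*(1/(N:ℝ)) + 8*(Real.log N/N))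
            atTop (nhds 0) := by
          have := (tendsto_one_div_atTop_nhds_zero_nat.const_mul (8*Real.log K+12)).add
            (log_div_nat_tendsto.const_mul 8)
          simpa using this
        apply h2.congr'
        filter_upwards [eventually_ge_atTop 1] with N hN1
        have hN : (0:ℝ) < N := by exact_mod_cast hN1
        field_simp
        ring
      have := hn.mul h1
      simpa using this
    apply squeeze_zero_norm' _ hg
    have ev1 : ∀ᶠ N : ℕ in atTop, (n N : ℝ)/N < ρ + 1 :=
      hn.eventually_lt_const (by linarith)
    have ev2 : ∀ᶠ N : ℕ in atTop, κ N/N < κL + 1 :=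
      hκ.eventually_lt_const (by linarith)
    have ev3 : ∀ᶠ N : ℕ in atTop, lam N/N < lamL + 1 :=
      hlam.eventually_lt_const (by linarith)
    filter_upwards [ev1, ev2, ev3, eventually_ge_atTop 1] with N h1 h2 h3 hN1
    have hN : (0:ℝ) < N := by exact_mod_cast hN1
    have hN1' : (1:ℝ) ≤ N := by exact_mod_cast hN1
    have hlogN : (0:ℝ) ≤ Real.log N := Real.log_nonneg hN1'
    have hb1 : (n N : ℝ) ≤ (ρ+1)*N := by
      rw [div_lt_iff₀ hN] at h1; linarith
    have hb2 : κ N ≤ (κL+1)*N := by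
      rw [div_lt_iff₀ hN] at h2; linarith
    have hb3 : lam N ≤ (lamL+1)*N := by
      rw [div_lt_iff₀ hN] at h3; linarith
    -- per-term bound
    have hub : ∀ x : ℝ, 1 ≤ x → x ≤ K*N →
        |Real.log (Real.Gamma x) - sL x| ≤ 2*(Real.log K + Real.log N) + 3 := by
      intro x hx hxK
      have h := stirling_bound x hx
      have hlx : Real.log x ≤ Real.log K + Real.log N := by
        calc Real.log x ≤ Real.log (K*N) := Real.log_le_log (by linarith) hxK
          _ = Real.log K + Real.log N := Real.log_mul (ne_of_gt hKpos) (ne_of_gt hN)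
      linarith [abs_nonneg (Real.log (Real.Gamma x) - sL x)]
    have hterm : ∀ j ∈ Finset.Icc 1 (n N),
        |(Real.log (Real.Gamma ((j:ℝ)+1)) + Real.log (Real.Gamma ((j:ℝ)+κ N))
          + Real.log (Real.Gamma ((j:ℝ)+lam N))
          - Real.log (Real.Gamma ((j:ℝ)+(n N:ℝ)+κ N+lam N)))
          - (sL ((j:ℝ)+1) + sL ((j:ℝ)+κ N) + sL ((j:ℝ)+lam N)
            - sL ((j:ℝ)+(n N:ℝ)+κ N+lam N))|
        ≤ 4*(2*(Real.log K + Real.log N) + 3) := by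
      intro j hj
      obtain ⟨a1, a2, a3, a4⟩ := hargs N j hj
      have hjn : (j:ℝ) ≤ (n N:ℝ) := by
        exact_mod_cast (Finset.mem_Icc.1 hj).2
      have hρN : (0:ℝ) ≤ ρ*N := by positivity
      have hκLN : (0:ℝ) ≤ κL*N := by positivity
      have hlamLN : (0:ℝ) ≤ lamL*N := by positivity
      have hκN' : (0:ℝ) ≤ κ N := hκ0 N
      have hlamN' : (0:ℝ) ≤ lam N := hlam0 N
      have hx1 : (j:ℝ)+1 ≤ K*(N:ℝ) := by rw [hK]; linarith
      have hx2 : (j:ℝ)+κ N ≤ K*(N:ℝ) := by rw [hK]; linarith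
      have hx3 : (j:ℝ)+lam N ≤ K*(N:ℝ) := by rw [hK]; linarith
      have hx4 : (j:ℝ)+(n N:ℝ)+κ N+lam N ≤ K*(N:ℝ) := by rw [hK]; linarith
      exact abs_four (hub _ a1 hx1) (hub _ a2 hx2) (hub _ a3 hx3) (hub _ a4 hx4)
    have hsum := sum_err_bound _ _ (Finset.Icc 1 (n N)) _ hterm
    rw [Real.norm_eq_abs, abs_mul, abs_of_pos (by positivity : (0:ℝ) < 1/(N:ℝ)^2)]
    have hcard : ((Finset.Icc 1 (n N)).card : ℝ) = (n N : ℝ) := by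
      rw [Nat.card_Icc]; norm_num
    rw [hcard] at hsum
    have hCnn : (0:ℝ) ≤ 4*(2*(Real.log K + Real.log N) + 3) := by positivity
    calc (1/(N:ℝ)^2) * |(∑ j ∈ Finset.Icc 1 (n N),
          (Real.log (Real.Gamma ((j:ℝ)+1)) + Real.log (Real.Gamma ((j:ℝ)+κ N))
            + Real.log (Real.Gamma ((j:ℝ)+lam N))
            - Real.log (Real.Gamma ((j:ℝ)+(n N:ℝ)+κ N+lam N))))
          - ∑ j ∈ Finset.Icc 1 (n N),
            (sL ((j:ℝ)+1) + sL ((j:ℝ)+κ N) + sL ((j:ℝ)+lam N)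
              - sL ((j:ℝ)+(n N:ℝ)+κ N+lam N))|
        ≤ (1/(N:ℝ)^2) * ((n N:ℝ) * (4*(2*(Real.log K + Real.log N) + 3))) := by
          apply mul_le_mul_of_nonneg_left hsum (by positivity)
      _ = ((n N:ℝ)/N) * ((8*(Real.log K + Real.log N) + 12)/N) := by
          field_simp
          ring
  -- combine
  have htot := hS.add herr
  rw [add_zero] at htot
  have hfin := final_algebra ρ κL lamL hρ hκL hlamL
  rw [hB]
  rw [← hfin]
  apply htot.congr'
  filter_upwards [] with N
  rw [hlogZ N]
  ring
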